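/- Let X(n) be a two-dimensional nearest-neighbor random walk with jump probabilities p₁, q₁, p₂, q₂ (right, left, up, down) where p₁+q₁ > 0 and p₂+q₂ > 0, and let m* = (p₁−q₁, p₂−q₂). Then there is a constant c > 0 independent of n and of the admissible targets such that P(X(n) = m*·n) ≥ c·n^{−3/2} whenever m*·n is an attainable lattice point with the correct parity. -/

import Mathlib

set_option maxHeartbeats 1600000

open Real

lemma rwl_stirling_antitone : Antitone (fun k : ℕ => Stirling.stirlingSeq (k+1)) := by
  intro a b hab
  have h := Stirling.log_stirlingSeq'_antitone hab
  simp only [Function.comp] at h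
  have ha := Stirling.stirlingSeq'_pos a
  have hb := Stirling.stirlingSeq'_pos b
  exact (Real.log_le_log_iff hb ha).1 h

lemma rwl_sqrt_pi_le (k : ℕ) : Real.sqrt π ≤ Stirling.stirlingSeq (k+1) := by
  have hlim : Filter.Tendsto (fun k : ℕ => Stirling.stirlingSeq (k+1)) Filter.atTop (nhds (Real.sqrt π)) :=
    Stirling.tendsto_stirlingSeq_sqrt_pi.comp (Filter.tendsto_add_atTop_nat 1)
  exact rwl_stirling_antitone.le_of_tendsto hlim k

lemma rwl_le_e_div (k : ℕ) : Stirling.stirlingSeq (k+1) ≤ Real.exp 1 / Real.sqrt 2 := by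
  have := rwl_stirling_antitone (Nat.zero_le k)
  simpa [Stirling.stirlingSeq_one] using this

lemma rwl_seq_eq (k : ℕ) : Stirling.stirlingSeq (k+1) =
    ((k+1).factorial : ℝ) / (Real.sqrt (2*((k:ℝ)+1)) * (((k:ℝ)+1)/Real.exp 1)^(k+1)) := by
  simp [Stirling.stirlingSeq]

-- n! lower bound
lemma rwl_fac_lower (n : ℕ) (hn : 1 ≤ n) :
    Real.sqrt π * Real.sqrt (2*n) * ((n:ℝ) / Real.exp 1)^n ≤ n.factorial := by
  obtain ⟨k, rfl⟩ : ∃ k, n = k + 1 := ⟨n - 1, by omega⟩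
  have h := rwl_sqrt_pi_le k
  rw [rwl_seq_eq k] at h
  have hpos : 0 < Real.sqrt (2*((k:ℝ)+1)) * (((k:ℝ)+1)/Real.exp 1)^(k+1) := by positivity
  rw [le_div_iff₀ hpos] at h
  push_cast
  nlinarith [h]

lemma rwl_fac_upper (m : ℕ) :
    (m.factorial : ℝ) ≤ Real.exp 1 * Real.sqrt (max (m:ℝ) 1) * ((m:ℝ) / Real.exp 1)^m := by
  cases m with
  | zero =>
    norm_num
  | succ k =>
    have h := rwl_le_e_div k
    rw [rwl_seq_eq k] at h
    have hpos : 0 < Real.sqrt (2*((k:ℝ)+1)) * (((k:ℝ)+1)/Real.exp 1)^(k+1) := by positivity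
    rw [div_le_iff₀ hpos] at h
    have hmax : (max ((k:ℝ)+1) 1) = (k:ℝ)+1 := by
      rw [max_eq_left]
      have : (0:ℝ) ≤ k := Nat.cast_nonneg k
      linarith
    have h2 : Real.sqrt (2*((k:ℝ)+1)) = Real.sqrt 2 * Real.sqrt ((k:ℝ)+1) := by
      rw [← Real.sqrt_mul (by norm_num)]
    rw [h2] at h
    have hsq2 : (0:ℝ) < Real.sqrt 2 := by positivity
    have he : Real.exp 1 / Real.sqrt 2 * (Real.sqrt 2 * Real.sqrt ((k:ℝ)+1) * (((k:ℝ)+1)/Real.exp 1)^(k+1))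
        = Real.exp 1 * Real.sqrt ((k:ℝ)+1) * (((k:ℝ)+1)/Real.exp 1)^(k+1) := by
      field_simp
    push_cast
    rw [hmax]
    push_cast at h
    rw [he] at h
    exact h

open Real

lemma rwl_ratio (n k : ℕ) (p : ℝ) (hp : 0 ≤ p) (hn : 1 ≤ n)
    (hd : |(k:ℝ) - n*p| ≤ 1) (hpos : 0 < k → 0 < p) :
    Real.exp ((n:ℝ)*p - k - 1 - p⁻¹) ≤ ((n:ℝ)*p)^k / ((k:ℝ))^k := by
  rcases Nat.eq_zero_or_pos k with hk | hk
  · subst hk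
    simp only [Nat.cast_zero, pow_zero]
    rw [div_one]
    have : (n:ℝ)*p - 0 - 1 - p⁻¹ ≤ 0 := by
      rcases eq_or_lt_of_le hp with h0 | h0
      · rw [← h0]; simp
      · have h1 : (n:ℝ)*p ≤ 1 := by
          have := abs_le.1 hd
          push_cast at this
          linarith [this.1]
        have : 0 < p⁻¹ := by positivity
        linarith
    calc Real.exp ((n:ℝ)*p - 0 - 1 - p⁻¹) ≤ Real.exp 0 := Real.exp_le_exp.2 this
      _ = 1 := Real.exp_zero
  · have hppos : 0 < p := hpos hk
    have hkpos : (0:ℝ) < k := by exact_mod_cast hk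
    have hnp : 0 < (n:ℝ)*p := by
      have : (0:ℝ) < n := by exact_mod_cast hn
      positivity
    have hratio : 0 < (n:ℝ)*p / k := by positivity
    have hrw : ((n:ℝ)*p)^k / ((k:ℝ))^k = Real.exp ((k:ℝ) * Real.log ((n:ℝ)*p/(k:ℝ))) := by
      rw [← div_pow, ← Real.rpow_natCast ((n:ℝ)*p/(k:ℝ)) k, Real.rpow_def_of_pos hratio, mul_comm]
    rw [hrw, Real.exp_le_exp]
    have hlog : Real.log ((k:ℝ)/((n:ℝ)*p)) ≤ (k:ℝ)/((n:ℝ)*p) - 1 :=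
      Real.log_le_sub_one_of_pos (by positivity)
    have hlog2 : 1 - (k:ℝ)/((n:ℝ)*p) ≤ Real.log ((n:ℝ)*p/(k:ℝ)) := by
      have heq : (n:ℝ)*p/(k:ℝ) = ((k:ℝ)/((n:ℝ)*p))⁻¹ := by
        field_simp
      rw [heq, Real.log_inv]
      linarith
    have hstep : (k:ℝ) - (k:ℝ)^2/((n:ℝ)*p) ≤ (k:ℝ) * Real.log ((n:ℝ)*p/(k:ℝ)) := by
      have := mul_le_mul_of_nonneg_left hlog2 (le_of_lt hkpos)
      calc (k:ℝ) - (k:ℝ)^2/((n:ℝ)*p) = (k:ℝ) * (1 - (k:ℝ)/((n:ℝ)*p)) := by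
            field_simp
        _ ≤ (k:ℝ) * Real.log ((n:ℝ)*p/(k:ℝ)) := this
    refine le_trans ?_ hstep
    -- np - k - 1 - p⁻¹ ≤ k - k²/(np), i.e. (np-k)² ≤ np + np·p⁻¹ = np + n... suffices (np-k)² ≤ 1 ≤ 1 + ...
    have habs : ((k:ℝ) - n*p)^2 ≤ 1 := by
      have := abs_le.1 hd
      nlinarith [this.1, this.2]
    have hinv : ((n:ℝ)*p) * p⁻¹ = n := by
      field_simp
    have hn1 : (1:ℝ) ≤ n := by exact_mod_cast hn
    have e1 : (k:ℝ)^2/((n:ℝ)*p) * ((n:ℝ)*p) = (k:ℝ)^2 := div_mul_cancel₀ _ (ne_of_gt hnp)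
    nlinarith [habs, hnp, hn1, hinv, e1]

open Real


lemma rwl_kk_pos (k : ℕ) : (0:ℝ) < ((k:ℝ))^k := by
  rcases Nat.eq_zero_or_pos k with hk | hk
  · subst hk; norm_num
  · have : (0:ℝ) < k := by exact_mod_cast hk
    positivity

lemma rwl_factor (n k : ℕ) (p : ℝ) (hp : 0 ≤ p) (hn : 1 ≤ n)
    (hd : |(k:ℝ) - n*p| ≤ 1) (hpos : 0 < k → 0 < p) :
    Real.exp ((n:ℝ)*p - k - 1 - p⁻¹) * (Real.exp 1 / (n:ℝ))^k / (Real.exp 1 * Real.sqrt (max (k:ℝ) 1))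
      ≤ p^k / (k.factorial : ℝ) := by
  have hfac : (0:ℝ) < k.factorial := by exact_mod_cast k.factorial_pos
  have hmax : (0:ℝ) < max (k:ℝ) 1 := lt_max_of_lt_right one_pos
  have hnr : (0:ℝ) < n := by exact_mod_cast hn
  have hkk := rwl_kk_pos k
  have hke : (0:ℝ) < (((k:ℝ))/Real.exp 1)^k := by
    rw [div_pow]; positivity
  have hse : (0:ℝ) < Real.exp 1 * Real.sqrt (max (k:ℝ) 1) := by positivity
  have h1 : p^k / (Real.exp 1 * Real.sqrt (max (k:ℝ) 1) * (((k:ℝ))/Real.exp 1)^k) ≤ p^k / (k.factorial:ℝ) :=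
    div_le_div_of_nonneg_left (pow_nonneg hp k) hfac (rwl_fac_upper k)
  refine le_trans ?_ h1
  have hratio := rwl_ratio n k p hp hn hd hpos
  rw [div_le_div_iff₀ hse (by positivity)]
  have hEnn : (0:ℝ) ≤ (Real.exp 1 / (n:ℝ))^k := by positivity
  calc Real.exp ((n:ℝ)*p - k - 1 - p⁻¹) * (Real.exp 1 / (n:ℝ))^k *
        (Real.exp 1 * Real.sqrt (max (k:ℝ) 1) * (((k:ℝ))/Real.exp 1)^k)
      = Real.exp ((n:ℝ)*p - k - 1 - p⁻¹) * ((Real.exp 1 / (n:ℝ))^k * (((k:ℝ))/Real.exp 1)^k)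
          * (Real.exp 1 * Real.sqrt (max (k:ℝ) 1)) := by ring
    _ ≤ (((n:ℝ)*p)^k / ((k:ℝ))^k) * ((Real.exp 1 / (n:ℝ))^k * (((k:ℝ))/Real.exp 1)^k)
          * (Real.exp 1 * Real.sqrt (max (k:ℝ) 1)) := by
        have : (0:ℝ) ≤ (Real.exp 1 / (n:ℝ))^k * (((k:ℝ))/Real.exp 1)^k := by positivity
        exact mul_le_mul_of_nonneg_right (mul_le_mul_of_nonneg_right hratio this) (le_of_lt hse)
    _ = p^k * (Real.exp 1 * Real.sqrt (max (k:ℝ) 1)) := by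
        rw [div_pow, div_pow, mul_pow]
        have he : (Real.exp 1)^k ≠ 0 := pow_ne_zero _ (Real.exp_pos 1).ne'
        have hnne : ((n:ℝ))^k ≠ 0 := pow_ne_zero _ hnr.ne'
        field_simp

open Real


lemma rwl_core (n k1 k2 k3 k4 : ℕ) (p1 p2 p3 p4 : ℝ)
    (h1 : 0 ≤ p1) (h2 : 0 ≤ p2) (h3 : 0 ≤ p3) (h4 : 0 ≤ p4)
    (hn : 1 ≤ n) (hks : k1+k2+k3+k4 = n) (hps : p1+p2+p3+p4 = 1)
    (hd1 : |(k1:ℝ) - n*p1| ≤ 1) (hd2 : |(k2:ℝ) - n*p2| ≤ 1)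
    (hd3 : |(k3:ℝ) - n*p3| ≤ 1) (hd4 : |(k4:ℝ) - n*p4| ≤ 1)
    (hg1 : 0 < k1 → 0 < p1) (hg2 : 0 < k2 → 0 < p2)
    (hg3 : 0 < k3 → 0 < p3) (hg4 : 0 < k4 → 0 < p4) :
    Real.sqrt (2*π) * Real.exp (-8 - (p1⁻¹+p2⁻¹+p3⁻¹+p4⁻¹)) * Real.sqrt n / ((n:ℝ)^2)
      ≤ ((n.factorial:ℝ) / ((k1.factorial:ℝ) * k2.factorial * k3.factorial * k4.factorial))
        * (p1^k1 * p2^k2 * p3^k3 * p4^k4) := by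
  set E := Real.exp 1 with hE
  set S1 := Real.sqrt (max (k1:ℝ) 1) with hS1
  set S2 := Real.sqrt (max (k2:ℝ) 1) with hS2
  set S3 := Real.sqrt (max (k3:ℝ) 1) with hS3
  set S4 := Real.sqrt (max (k4:ℝ) 1) with hS4
  set Sinv := p1⁻¹+p2⁻¹+p3⁻¹+p4⁻¹ with hSinv
  have hnr : (0:ℝ) < n := by exact_mod_cast hn
  have hEpos : (0:ℝ) < E := Real.exp_pos 1
  have hS1p : (0:ℝ) < S1 := Real.sqrt_pos.2 (lt_max_of_lt_right one_pos)
  have hS2p : (0:ℝ) < S2 := Real.sqrt_pos.2 (lt_max_of_lt_right one_pos)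
  have hS3p : (0:ℝ) < S3 := Real.sqrt_pos.2 (lt_max_of_lt_right one_pos)
  have hS4p : (0:ℝ) < S4 := Real.sqrt_pos.2 (lt_max_of_lt_right one_pos)
  have hf1 : (0:ℝ) < k1.factorial := by exact_mod_cast k1.factorial_pos
  have hf2 : (0:ℝ) < k2.factorial := by exact_mod_cast k2.factorial_pos
  have hf3 : (0:ℝ) < k3.factorial := by exact_mod_cast k3.factorial_pos
  have hf4 : (0:ℝ) < k4.factorial := by exact_mod_cast k4.factorial_pos
  -- Mid term
  set A1 := (n:ℝ)*p1 - k1 - 1 - p1⁻¹ with hA1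
  set A2 := (n:ℝ)*p2 - k2 - 1 - p2⁻¹ with hA2
  set A3 := (n:ℝ)*p3 - k3 - 1 - p3⁻¹ with hA3
  set A4 := (n:ℝ)*p4 - k4 - 1 - p4⁻¹ with hA4
  set Mid := (Real.sqrt π * Real.sqrt (2*n) * ((n:ℝ)/E)^n)
      * (Real.exp A1 * (E/(n:ℝ))^k1 / (E * S1))
      * (Real.exp A2 * (E/(n:ℝ))^k2 / (E * S2))
      * (Real.exp A3 * (E/(n:ℝ))^k3 / (E * S3))
      * (Real.exp A4 * (E/(n:ℝ))^k4 / (E * S4)) with hMidDef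
  -- step 1 : Mid ≤ RHS
  have hsplit : ((n.factorial:ℝ) / ((k1.factorial:ℝ) * k2.factorial * k3.factorial * k4.factorial))
        * (p1^k1 * p2^k2 * p3^k3 * p4^k4)
      = (n.factorial:ℝ) * (p1^k1/(k1.factorial:ℝ)) * (p2^k2/(k2.factorial:ℝ))
        * (p3^k3/(k3.factorial:ℝ)) * (p4^k4/(k4.factorial:ℝ)) := by
    field_simp
  have hstep1 : Mid ≤ ((n.factorial:ℝ) / ((k1.factorial:ℝ) * k2.factorial * k3.factorial * k4.factorial))
        * (p1^k1 * p2^k2 * p3^k3 * p4^k4) := by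
    rw [hsplit, hMidDef]
    gcongr ?_ * ?_ * ?_ * ?_ * ?_ <;>
      first
        | exact rwl_fac_lower n hn
        | exact rwl_factor n k1 p1 h1 hn hd1 hg1
        | exact rwl_factor n k2 p2 h2 hn hd2 hg2
        | exact rwl_factor n k3 p3 h3 hn hd3 hg3
        | exact rwl_factor n k4 p4 h4 hn hd4 hg4
        | positivity
  refine le_trans ?_ hstep1
  -- step 2 : LHS ≤ Mid
  have hkr : (k1:ℝ)+(k2:ℝ)+(k3:ℝ)+(k4:ℝ) = n := by exact_mod_cast hks
  have hE4 : Real.exp A1 * Real.exp A2 * Real.exp A3 * Real.exp A4 = Real.exp (-4 - Sinv) := by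
    rw [← Real.exp_add, ← Real.exp_add, ← Real.exp_add]
    congr 1
    rw [hA1, hA2, hA3, hA4, hSinv]
    linear_combination (n:ℝ) * hps - hkr
  have hpow : (E/(n:ℝ))^k1 * (E/(n:ℝ))^k2 * (E/(n:ℝ))^k3 * (E/(n:ℝ))^k4 = (E/(n:ℝ))^n := by
    rw [← pow_add, ← pow_add, ← pow_add, hks]
  have hcan : ((n:ℝ)/E)^n * (E/(n:ℝ))^n = 1 := by
    rw [← mul_pow]
    have : (n:ℝ)/E * (E/(n:ℝ)) = 1 := by field_simp
    rw [this, one_pow]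
  have hMid2 : Mid = Real.sqrt π * Real.sqrt (2*n)
      * (((n:ℝ)/E)^n * ((E/(n:ℝ))^k1 * (E/(n:ℝ))^k2 * (E/(n:ℝ))^k3 * (E/(n:ℝ))^k4))
      * (Real.exp A1 * Real.exp A2 * Real.exp A3 * Real.exp A4)
      / ((E*S1) * (E*S2) * (E*S3) * (E*S4)) := by
    rw [hMidDef]; ring
  rw [hMid2, hpow, hcan, mul_one, hE4]
  -- now pure comparison
  have hW : S1*S2*S3*S4 ≤ (n:ℝ)^2 := by
    have hc1 : S1 ≤ Real.sqrt n := by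
      apply Real.sqrt_le_sqrt
      have : (k1:ℝ) ≤ n := by
        have : k1 ≤ n := by omega
        exact_mod_cast this
      exact max_le this (by exact_mod_cast hn)
    have hc2 : S2 ≤ Real.sqrt n := by
      apply Real.sqrt_le_sqrt
      have : (k2:ℝ) ≤ n := by
        have : k2 ≤ n := by omega
        exact_mod_cast this
      exact max_le this (by exact_mod_cast hn)
    have hc3 : S3 ≤ Real.sqrt n := by
      apply Real.sqrt_le_sqrt
      have : (k3:ℝ) ≤ n := by
        have : k3 ≤ n := by omega
        exact_mod_cast this
      exact max_le this (by exact_mod_cast hn)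
    have hc4 : S4 ≤ Real.sqrt n := by
      apply Real.sqrt_le_sqrt
      have : (k4:ℝ) ≤ n := by
        have : k4 ≤ n := by omega
        exact_mod_cast this
      exact max_le this (by exact_mod_cast hn)
    have hss : Real.sqrt (n:ℝ) * Real.sqrt (n:ℝ) = n := Real.mul_self_sqrt (le_of_lt hnr)
    calc S1*S2*S3*S4 ≤ Real.sqrt n * Real.sqrt n * Real.sqrt n * Real.sqrt n := by
          gcongr <;> first | exact hc1 | exact hc2 | exact hc3 | exact hc4 | positivity
      _ = (n:ℝ)^2 := by rw [show Real.sqrt (n:ℝ) * Real.sqrt (n:ℝ) * Real.sqrt (n:ℝ) * Real.sqrt (n:ℝ)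
            = (Real.sqrt (n:ℝ) * Real.sqrt (n:ℝ)) * (Real.sqrt (n:ℝ) * Real.sqrt (n:ℝ)) from by ring, hss]; ring
  set C' := Real.sqrt 2 * Real.sqrt π * Real.sqrt n * Real.exp (-8 - Sinv) with hC'
  have hC'nn : 0 ≤ C' := by positivity
  have hEqL : Real.sqrt (2*π) * Real.exp (-8 - Sinv) * Real.sqrt n / ((n:ℝ)^2) = C' / (n:ℝ)^2 := by
    rw [Real.sqrt_mul (by norm_num : (0:ℝ) ≤ 2), hC']
    ring
  have hexp48 : Real.exp (-4 - Sinv) = Real.exp (-8 - Sinv) * E^4 := by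
    rw [hE, ← Real.exp_nat_mul, ← Real.exp_add]
    push_cast
    ring
  have hEqR : Real.sqrt π * Real.sqrt (2*n) * Real.exp (-4 - Sinv) / ((E*S1) * (E*S2) * (E*S3) * (E*S4))
      = C' / (S1*S2*S3*S4) := by
    rw [Real.sqrt_mul (by norm_num : (0:ℝ) ≤ 2), hexp48, hC']
    field_simp
  rw [hEqL, hEqR]
  exact div_le_div_of_nonneg_left hC'nn (by positivity) hW


open Finset

abbrev rwlT (n k1 k3 na : ℕ) : Finset (Finset ℕ × Finset ℕ × Finset ℕ) :=
  ((Finset.range n).powersetCard na).biUnion (fun H =>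
    ((H.powersetCard k1) ×ˢ (((Finset.range n) \ H).powersetCard k3)).image
      (fun RU => (H, RU.1, RU.2)))

lemma rwlT_mem {n k1 k3 na : ℕ} {t : Finset ℕ × Finset ℕ × Finset ℕ} :
    t ∈ rwlT n k1 k3 na ↔ (t.1 ⊆ Finset.range n ∧ t.1.card = na ∧ t.2.1 ⊆ t.1 ∧
      t.2.1.card = k1 ∧ t.2.2 ⊆ Finset.range n \ t.1 ∧ t.2.2.card = k3) := by
  constructor
  · intro ht
    simp only [rwlT, Finset.mem_biUnion, Finset.mem_image, Finset.mem_product,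
      Finset.mem_powersetCard] at ht
    obtain ⟨H, ⟨hH1, hH2⟩, ⟨RU, ⟨⟨hR1, hR2⟩, hU1, hU2⟩, rfl⟩⟩ := ht
    exact ⟨hH1, hH2, hR1, hR2, hU1, hU2⟩
  · rintro ⟨h1, h2, h3, h4, h5, h6⟩
    simp only [rwlT, Finset.mem_biUnion, Finset.mem_image, Finset.mem_product,
      Finset.mem_powersetCard]
    exact ⟨t.1, ⟨h1, h2⟩, ⟨(t.2.1, t.2.2), ⟨⟨h3, h4⟩, h5, h6⟩, rfl⟩⟩

lemma rwlT_card (n k1 k3 na : ℕ) :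
    (rwlT n k1 k3 na).card = (n.choose na) * (na.choose k1) * ((n - na).choose k3) := by
  rw [rwlT, Finset.card_biUnion]
  · have hcongr : ∀ H ∈ (Finset.range n).powersetCard na,
        (((H.powersetCard k1) ×ˢ (((Finset.range n) \ H).powersetCard k3)).image
          (fun RU => (H, RU.1, RU.2))).card = (na.choose k1) * ((n - na).choose k3) := by
      intro H hH
      rw [Finset.mem_powersetCard] at hH
      rw [Finset.card_image_of_injective _ (by intro a b hab; simpa [Prod.ext_iff] using hab)]
      rw [Finset.card_product, Finset.card_powersetCard, Finset.card_powersetCard,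
        hH.2, Finset.card_sdiff_of_subset hH.1, Finset.card_range, hH.2]
    rw [Finset.sum_congr rfl hcongr, Finset.sum_const, Finset.card_powersetCard,
      Finset.card_range, smul_eq_mul, mul_assoc]
  · intro H1 h1 H2 h2 hne
    simp only [Finset.disjoint_left, Finset.mem_image]
    rintro t ⟨RU, _, rfl⟩ ⟨RU', _, h⟩
    apply hne
    have := congrArg Prod.fst h
    simpa using this.symm
open Finset

abbrev rwlG (t : Finset ℕ × Finset ℕ × Finset ℕ) (i : ℕ) : ℤ × ℤ :=
  if i ∈ t.2.1 then (1,0) else if i ∈ t.1 then (-1,0) else if i ∈ t.2.2 then (0,1) else (0,-1)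

lemma rwlG_mem_R {t : Finset ℕ × Finset ℕ × Finset ℕ} {i : ℕ}
    (h : i ∈ t.2.1) : rwlG t i = (1,0) := if_pos h

lemma rwlG_mem_HR {t : Finset ℕ × Finset ℕ × Finset ℕ} {i : ℕ}
    (h : i ∈ t.1) (h2 : i ∉ t.2.1) : rwlG t i = (-1,0) := by
  simp [rwlG, h, h2]

lemma rwlG_mem_U {t : Finset ℕ × Finset ℕ × Finset ℕ} {i : ℕ}
    (h : i ∉ t.1) (h2 : i ∉ t.2.1) (h3 : i ∈ t.2.2) : rwlG t i = (0,1) := by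
  simp [rwlG, h, h2, h3]

lemma rwlG_mem_D {t : Finset ℕ × Finset ℕ × Finset ℕ} {i : ℕ}
    (h : i ∉ t.1) (h2 : i ∉ t.2.1) (h3 : i ∉ t.2.2) : rwlG t i = (0,-1) := by
  simp [rwlG, h, h2, h3]

-- recovery
lemma rwlG_iff_R {t : Finset ℕ × Finset ℕ × Finset ℕ} (hRH : t.2.1 ⊆ t.1) {i : ℕ} :
    i ∈ t.2.1 ↔ rwlG t i = (1,0) := by
  constructor
  · exact rwlG_mem_R
  · intro h
    by_contra hR
    by_cases hH : i ∈ t.1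
    · rw [rwlG_mem_HR hH hR] at h; exact absurd h (by decide)
    · by_cases hU : i ∈ t.2.2
      · rw [rwlG_mem_U hH hR hU] at h; exact absurd h (by decide)
      · rw [rwlG_mem_D hH hR hU] at h; exact absurd h (by decide)

lemma rwlG_iff_H {t : Finset ℕ × Finset ℕ × Finset ℕ} (hRH : t.2.1 ⊆ t.1) {i : ℕ} :
    i ∈ t.1 ↔ (rwlG t i).2 = 0 := by
  constructor
  · intro hH
    by_cases hR : i ∈ t.2.1
    · rw [rwlG_mem_R hR]
    · rw [rwlG_mem_HR hH hR]
  · intro h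
    by_contra hH
    have hR : i ∉ t.2.1 := fun hR => hH (hRH hR)
    by_cases hU : i ∈ t.2.2
    · rw [rwlG_mem_U hH hR hU] at h; exact absurd h (by decide)
    · rw [rwlG_mem_D hH hR hU] at h; exact absurd h (by decide)

lemma rwlG_iff_U {t : Finset ℕ × Finset ℕ × Finset ℕ} (hRH : t.2.1 ⊆ t.1)
    (hUH : ∀ i ∈ t.2.2, i ∉ t.1) {i : ℕ} :
    i ∈ t.2.2 ↔ rwlG t i = (0,1) := by
  constructor
  · intro hU
    exact rwlG_mem_U (hUH i hU) (fun hR => (hUH i hU) (hRH hR)) hU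
  · intro h
    by_contra hU
    by_cases hR : i ∈ t.2.1
    · rw [rwlG_mem_R hR] at h; exact absurd h (by decide)
    · by_cases hH : i ∈ t.1
      · rw [rwlG_mem_HR hH hR] at h; exact absurd h (by decide)
      · rw [rwlG_mem_D hH hR hU] at h; exact absurd h (by decide)

lemma rwlG_inj {n k1 k3 na : ℕ} {t t' : Finset ℕ × Finset ℕ × Finset ℕ}
    (ht : t ∈ rwlT n k1 k3 na) (ht' : t' ∈ rwlT n k1 k3 na)
    (h : ∀ i ∈ Finset.range n, rwlG t i = rwlG t' i) : t = t' := by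
  obtain ⟨hH, hcardH, hRH, hcardR, hU, hcardU⟩ := rwlT_mem.1 ht
  obtain ⟨hH', hcardH', hRH', hcardR', hU', hcardU'⟩ := rwlT_mem.1 ht'
  have hUH : ∀ i ∈ t.2.2, i ∉ t.1 := fun i hi => (Finset.mem_sdiff.1 (hU hi)).2
  have hUH' : ∀ i ∈ t'.2.2, i ∉ t'.1 := fun i hi => (Finset.mem_sdiff.1 (hU' hi)).2
  have e1 : t.1 = t'.1 := by
    ext i
    constructor
    · intro hi
      exact (rwlG_iff_H hRH').2 (h i (hH hi) ▸ (rwlG_iff_H hRH).1 hi)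
    · intro hi
      exact (rwlG_iff_H hRH).2 ((h i (hH' hi)).symm ▸ (rwlG_iff_H hRH').1 hi)
  have e2 : t.2.1 = t'.2.1 := by
    ext i
    constructor
    · intro hi
      exact (rwlG_iff_R hRH').2 (h i (hH (hRH hi)) ▸ (rwlG_iff_R hRH).1 hi)
    · intro hi
      exact (rwlG_iff_R hRH).2 ((h i (hH' (hRH' hi))).symm ▸ (rwlG_iff_R hRH').1 hi)
  have e3 : t.2.2 = t'.2.2 := by
    ext i
    constructor
    · intro hi
      have hir : i ∈ Finset.range n := (Finset.mem_sdiff.1 (hU hi)).1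
      exact (rwlG_iff_U hRH' hUH').2 (h i hir ▸ (rwlG_iff_U hRH hUH).1 hi)
    · intro hi
      have hir : i ∈ Finset.range n := (Finset.mem_sdiff.1 (hU' hi)).1
      exact (rwlG_iff_U hRH hUH).2 ((h i hir).symm ▸ (rwlG_iff_U hRH' hUH').1 hi)
  exact Prod.ext e1 (Prod.ext e2 e3)

@[to_additive]
lemma rwl_prod_parts {M : Type*} [CommMonoid M] {n k1 k2 k3 k4 : ℕ}
    {t : Finset ℕ × Finset ℕ × Finset ℕ}
    (ht : t ∈ rwlT n k1 k3 (k1+k2)) (hn : k1+k2+k3+k4 = n) (F : ℕ → M) (a b c d : M)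
    (hFa : ∀ i ∈ t.2.1, F i = a)
    (hFb : ∀ i ∈ t.1, i ∉ t.2.1 → F i = b)
    (hFc : ∀ i ∈ t.2.2, F i = c)
    (hFd : ∀ i ∈ Finset.range n, i ∉ t.1 → i ∉ t.2.2 → F i = d) :
    ∏ i ∈ Finset.range n, F i = (d^k4 * c^k3) * (b^k2 * a^k1) := by
  obtain ⟨hH, hcardH, hRH, hcardR, hU, hcardU⟩ := rwlT_mem.1 ht
  rw [← Finset.prod_sdiff hH, ← Finset.prod_sdiff hRH, ← Finset.prod_sdiff hU]
  have h1 : ∏ i ∈ t.2.1, F i = a ^ k1 := by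
    rw [Finset.prod_congr rfl (fun i hi => hFa i hi), Finset.prod_const, hcardR]
  have h2 : ∏ i ∈ t.1 \ t.2.1, F i = b ^ k2 := by
    rw [Finset.prod_congr rfl (fun i hi => hFb i (Finset.mem_sdiff.1 hi).1 (Finset.mem_sdiff.1 hi).2),
      Finset.prod_const, Finset.card_sdiff_of_subset hRH, hcardH, hcardR]
    congr 1
    omega
  have h3 : ∏ i ∈ t.2.2, F i = c ^ k3 := by
    rw [Finset.prod_congr rfl (fun i hi => hFc i hi), Finset.prod_const, hcardU]
  have h4 : ∏ i ∈ (Finset.range n \ t.1) \ t.2.2, F i = d ^ k4 := by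
    have : ∀ i ∈ (Finset.range n \ t.1) \ t.2.2, F i = d := by
      intro i hi
      obtain ⟨hi1, hi2⟩ := Finset.mem_sdiff.1 hi
      obtain ⟨hi3, hi4⟩ := Finset.mem_sdiff.1 hi1
      exact hFd i hi3 hi4 hi2
    rw [Finset.prod_congr rfl this, Finset.prod_const, Finset.card_sdiff_of_subset hU,
      Finset.card_sdiff_of_subset hH, Finset.card_range, hcardH, hcardU]
    congr 1
    omega
  rw [h1, h2, h3, h4]


lemma rwl_construct (p₁ q₁ p₂ q₂ : ℝ) (hp₁ : 0 ≤ p₁) (hq₁ : 0 ≤ q₁) (hp₂ : 0 ≤ p₂) (hq₂ : 0 ≤ q₂)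
    (hsum : p₁ + q₁ + p₂ + q₂ = 1) (n : ℕ) (x y : ℤ)
    (hx : (x:ℝ) = (p₁ - q₁) * n) (hy : (y:ℝ) = (p₂ - q₂) * n)
    (hpar : (x + y) % 2 = (n:ℤ) % 2) :
    ∃ k1 k2 k3 k4 : ℕ, k1+k2+k3+k4 = n ∧ x = (k1:ℤ) - k2 ∧ y = (k3:ℤ) - k4 ∧
      |(k1:ℝ) - n*p₁| ≤ 1 ∧ |(k2:ℝ) - n*q₁| ≤ 1 ∧ |(k3:ℝ) - n*p₂| ≤ 1 ∧ |(k4:ℝ) - n*q₂| ≤ 1 ∧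
      (0 < k1 → 0 < p₁) ∧ (0 < k2 → 0 < q₁) ∧ (0 < k3 → 0 < p₂) ∧ (0 < k4 → 0 < q₂) := by
  have hnn : (0:ℝ) ≤ n := Nat.cast_nonneg n
  obtain ⟨B, hB⟩ : ∃ B:ℤ, B = |x| := ⟨_, rfl⟩
  obtain ⟨C, hC⟩ : ∃ C:ℤ, C = |y| := ⟨_, rfl⟩
  have hB0 : 0 ≤ B := hB ▸ abs_nonneg x
  obtain ⟨u, hu⟩ : ∃ u:ℤ, B + x = 2*u :=
    ⟨(B+x)/2, by rcases abs_choice x with h | h <;> omega⟩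
  obtain ⟨w, hw⟩ : ∃ w:ℤ, C + y = 2*w :=
    ⟨(C+y)/2, by rcases abs_choice y with h | h <;> omega⟩
  obtain ⟨z, hz⟩ : ∃ z:ℤ, (n:ℤ) - x - y = 2*z := ⟨((n:ℤ)-x-y)/2, by omega⟩
  have hxB : x ≤ B ∧ -x ≤ B := ⟨hB ▸ le_abs_self x, hB ▸ neg_le_abs x⟩
  have hyC : y ≤ C ∧ -y ≤ C := ⟨hC ▸ le_abs_self y, hC ▸ neg_le_abs y⟩
  have hBr : (B:ℝ) = |(x:ℝ)| := by rw [hB]; push_cast; ring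
  have hCr : (C:ℝ) = |(y:ℝ)| := by rw [hC]; push_cast; ring
  have hxa : (B:ℝ) ≤ (n:ℝ)*(p₁+q₁) := by
    rw [hBr, hx, abs_mul, abs_of_nonneg hnn]
    have : |p₁ - q₁| ≤ p₁ + q₁ := abs_le.2 ⟨by linarith, by linarith⟩
    nlinarith
  have hya : (C:ℝ) ≤ (n:ℝ)*(p₂+q₂) := by
    rw [hCr, hy, abs_mul, abs_of_nonneg hnn]
    have : |p₂ - q₂| ≤ p₂ + q₂ := abs_le.2 ⟨by linarith, by linarith⟩
    nlinarith
  have hαy : (n:ℝ)*(p₁+q₁) ≤ (n:ℝ) - C := by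
    have hid : (n:ℝ)*(p₁+q₁) + (n:ℝ)*(p₂+q₂) = n := by linear_combination (n:ℝ) * hsum
    linarith
  obtain ⟨f, hfdef⟩ : ∃ f:ℤ, f = ⌊((n:ℝ)*(p₁+q₁) - (B:ℝ))/2⌋ := ⟨_, rfl⟩
  have hf0 : 0 ≤ f := hfdef ▸ Int.floor_nonneg.2 (by linarith)
  have hfle : 2*(f:ℝ) ≤ (n:ℝ)*(p₁+q₁) - B := by
    have := Int.floor_le (((n:ℝ)*(p₁+q₁) - (B:ℝ))/2)
    rw [← hfdef] at this
    linarith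
  have hfgt : (n:ℝ)*(p₁+q₁) - (B:ℝ) - 2 < 2*(f:ℝ) := by
    have := Int.lt_floor_add_one (((n:ℝ)*(p₁+q₁) - (B:ℝ))/2)
    rw [← hfdef] at this
    linarith
  obtain ⟨a, ha⟩ : ∃ a:ℤ, a = B + 2*f := ⟨_, rfl⟩
  have haR : (a:ℝ) = (B:ℝ) + 2*(f:ℝ) := by rw [ha]; push_cast; ring
  have ha2 : (a:ℝ) ≤ (n:ℝ)*(p₁+q₁) := by rw [haR]; linarith
  have ha3 : (n:ℝ)*(p₁+q₁) - 2 < (a:ℝ) := by rw [haR]; linarith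
  have ha4 : a ≤ (n:ℤ) - C := by
    have h1 : (a:ℝ) ≤ (((n:ℤ) - C : ℤ):ℝ) := by push_cast; linarith
    exact_mod_cast h1
  have ha1 : B ≤ a := by omega
  obtain ⟨K1, hK1⟩ : ∃ K, a + x = 2*K := ⟨(a+x)/2, by omega⟩
  obtain ⟨K3, hK3⟩ : ∃ K, (n:ℤ) - a + y = 2*K := ⟨((n:ℤ)-a+y)/2, by omega⟩
  obtain ⟨K2, hK2⟩ : ∃ K:ℤ, K = K1 - x := ⟨_, rfl⟩
  obtain ⟨K4, hK4⟩ : ∃ K:ℤ, K = K3 - y := ⟨_, rfl⟩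
  have hK1n : 0 ≤ K1 := by omega
  have hK2n : 0 ≤ K2 := by omega
  have hK3n : 0 ≤ K3 := by omega
  have hK4n : 0 ≤ K4 := by omega
  refine ⟨K1.toNat, K2.toNat, K3.toNat, K4.toNat, ?_, ?_, ?_, ?_, ?_, ?_, ?_, ?_, ?_, ?_, ?_⟩
  · omega
  · omega
  · omega
  all_goals have hk1r : ((K1.toNat : ℕ):ℝ) = (K1:ℝ) := by exact_mod_cast Int.toNat_of_nonneg hK1n
  all_goals have hk2r : ((K2.toNat : ℕ):ℝ) = (K2:ℝ) := by exact_mod_cast Int.toNat_of_nonneg hK2n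
  all_goals have hk3r : ((K3.toNat : ℕ):ℝ) = (K3:ℝ) := by exact_mod_cast Int.toNat_of_nonneg hK3n
  all_goals have hk4r : ((K4.toNat : ℕ):ℝ) = (K4:ℝ) := by exact_mod_cast Int.toNat_of_nonneg hK4n
  all_goals have hK1r : 2*(K1:ℝ) = (a:ℝ) + (x:ℝ) := by exact_mod_cast hK1.symm
  all_goals have hK3r : 2*(K3:ℝ) = (n:ℝ) - (a:ℝ) + (y:ℝ) := by exact_mod_cast hK3.symm
  all_goals have hK2r : 2*(K2:ℝ) = (a:ℝ) - (x:ℝ) := by rw [hK2]; push_cast; linarith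
  all_goals have hK4r : 2*(K4:ℝ) = (n:ℝ) - (a:ℝ) - (y:ℝ) := by rw [hK4]; push_cast; linarith
  -- the four |k - np| ≤ 1 bounds
  · rw [hk1r]
    rw [abs_le]
    constructor <;> nlinarith [hK1r, ha2, ha3, hx]
  · rw [hk2r]
    rw [abs_le]
    constructor <;> nlinarith [hK2r, ha2, ha3, hx]
  · rw [hk3r]
    rw [abs_le]
    have hnp2 : (n:ℝ)*p₂ = ((n:ℝ) - (n:ℝ)*(p₁+q₁) + (y:ℝ))/2 := by
      rw [hy]; linear_combination ((n:ℝ)/2) * hsum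
    constructor <;> nlinarith [hK3r, ha2, ha3]
  · rw [hk4r]
    rw [abs_le]
    have hnq2 : (n:ℝ)*q₂ = ((n:ℝ) - (n:ℝ)*(p₁+q₁) - (y:ℝ))/2 := by
      rw [hy]; linear_combination ((n:ℝ)/2) * hsum
    constructor <;> nlinarith [hK4r, ha2, ha3]
  -- support conditions
  · intro hk
    by_contra hple
    have hp0 : p₁ = 0 := le_antisymm (not_lt.1 hple) hp₁
    have hxval : (x:ℝ) = -(q₁ * n) := by rw [hx, hp0]; ring
    have hBval : (B:ℝ) = q₁ * n := by
      rw [hBr, hxval, abs_neg, abs_of_nonneg (by positivity)]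
    have harg : ((n:ℝ)*(p₁+q₁) - (B:ℝ))/2 = 0 := by
      rw [hBval, hp0]; ring
    have hf' : f = 0 := by rw [hfdef, harg]; exact Int.floor_zero
    have hBx' : (B:ℝ) = -(x:ℝ) := by rw [hBval]; linarith [hxval]
    have hBxi : B = -x := by exact_mod_cast hBx'
    omega
  · intro hk
    by_contra hple
    have hp0 : q₁ = 0 := le_antisymm (not_lt.1 hple) hq₁
    have hxval : (x:ℝ) = p₁ * n := by rw [hx, hp0]; ring
    have hBval : (B:ℝ) = p₁ * n := by
      rw [hBr, hxval, abs_of_nonneg (by positivity)]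
    have harg : ((n:ℝ)*(p₁+q₁) - (B:ℝ))/2 = 0 := by
      rw [hBval, hp0]; ring
    have hf' : f = 0 := by rw [hfdef, harg]; exact Int.floor_zero
    have hBxi : B = x := by
      have : (B:ℝ) = (x:ℝ) := by rw [hBval, ← hxval]
      exact_mod_cast this
    omega
  · intro hk
    by_contra hple
    have hp0 : p₂ = 0 := le_antisymm (not_lt.1 hple) hp₂
    have hyval : (y:ℝ) = -(q₂ * n) := by rw [hy, hp0]; ring
    have hna : (n:ℝ)*(p₁+q₁) = (n:ℝ) + y := by
      rw [hyval]; linear_combination (n:ℝ) * hsum - (n:ℝ) * hp0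
    obtain ⟨m, hm⟩ : ∃ m, (n:ℤ) + y - B = 2*m := ⟨((n:ℤ)+y-B)/2, by omega⟩
    have harg : ((n:ℝ)*(p₁+q₁) - (B:ℝ))/2 = (m:ℝ) := by
      rw [hna]
      have : ((2*m:ℤ):ℝ) = (((n:ℤ) + y - B:ℤ):ℝ) := by exact_mod_cast congrArg Int.cast hm.symm
      push_cast at this
      linarith
    have hf' : f = m := by rw [hfdef, harg]; exact Int.floor_intCast m
    omega
  · intro hk
    by_contra hple
    have hp0 : q₂ = 0 := le_antisymm (not_lt.1 hple) hq₂
    have hyval : (y:ℝ) = p₂ * n := by rw [hy, hp0]; ring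
    have hna : (n:ℝ)*(p₁+q₁) = (n:ℝ) - y := by
      rw [hyval]; linear_combination (n:ℝ) * hsum - (n:ℝ) * hp0
    obtain ⟨m, hm⟩ : ∃ m, (n:ℤ) - y - B = 2*m := ⟨((n:ℤ)-y-B)/2, by omega⟩
    have harg : ((n:ℝ)*(p₁+q₁) - (B:ℝ))/2 = (m:ℝ) := by
      rw [hna]
      have : ((2*m:ℤ):ℝ) = (((n:ℤ) - y - B:ℤ):ℝ) := by exact_mod_cast congrArg Int.cast hm.symm
      push_cast at this
      linarith
    have hf' : f = m := by rw [hfdef, harg]; exact Int.floor_intCast m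
    omega

open MeasureTheory ProbabilityTheory Finset in
lemma rwl_prob {Ω : Type*} [MeasurableSpace Ω] (μ : Measure Ω)
    (p₁ q₁ p₂ q₂ : ℝ) (hp₁ : 0 ≤ p₁) (hq₁ : 0 ≤ q₁) (hp₂ : 0 ≤ p₂) (hq₂ : 0 ≤ q₂)
    (ξ : ℕ → Ω → ℤ × ℤ) (hmeas : ∀ i, Measurable (ξ i))
    (hindep : iIndepFun ξ μ)
    (hd₁ : ∀ i, μ (ξ i ⁻¹' {((1 : ℤ), (0 : ℤ))}) = ENNReal.ofReal p₁)
    (hd₂ : ∀ i, μ (ξ i ⁻¹' {((-1 : ℤ), (0 : ℤ))}) = ENNReal.ofReal q₁)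
    (hd₃ : ∀ i, μ (ξ i ⁻¹' {((0 : ℤ), (1 : ℤ))}) = ENNReal.ofReal p₂)
    (hd₄ : ∀ i, μ (ξ i ⁻¹' {((0 : ℤ), (-1 : ℤ))}) = ENNReal.ofReal q₂)
    (n k1 k2 k3 k4 : ℕ) (hn : k1+k2+k3+k4 = n) (v : ℤ × ℤ)
    (hv1 : v.1 = (k1:ℤ) - k2) (hv2 : v.2 = (k3:ℤ) - k4) :
    ((n.choose (k1+k2) * (k1+k2).choose k1 * ((n-(k1+k2)).choose k3) : ℕ) : ENNReal)
      * ENNReal.ofReal (p₁^k1 * q₁^k2 * p₂^k3 * q₂^k4)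
      ≤ μ {ω | (∑ i ∈ Finset.range n, ξ i ω) = v} := by
  classical
  set T := rwlT n k1 k3 (k1+k2) with hT
  set P := ENNReal.ofReal (p₁^k1 * q₁^k2 * p₂^k3 * q₂^k4) with hP
  set A : (Finset ℕ × Finset ℕ × Finset ℕ) → Set Ω :=
    fun t => ⋂ i ∈ Finset.range n, ξ i ⁻¹' {rwlG t i} with hA
  have hmeasA : ∀ t, MeasurableSet (A t) := by
    intro t
    exact MeasurableSet.biInter (Set.to_countable _)
      (fun i _ => hmeas i (measurableSet_singleton _))
  have hmemA : ∀ t ω, ω ∈ A t ↔ ∀ i ∈ Finset.range n, ξ i ω = rwlG t i := by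
    intro t ω
    simp [hA, Set.mem_iInter]
  have hμA : ∀ t ∈ T, μ (A t) = P := by
    intro t ht
    obtain ⟨hH, hcardH, hRH, hcardR, hU, hcardU⟩ := rwlT_mem.1 ht
    rw [hA]
    rw [hindep.meas_biInter (fun i _ => ⟨{rwlG t i}, measurableSet_singleton _, rfl⟩)]
    have := rwl_prod_parts (M := ENNReal) ht hn (fun i => μ (ξ i ⁻¹' {rwlG t i}))
      (ENNReal.ofReal p₁) (ENNReal.ofReal q₁) (ENNReal.ofReal p₂) (ENNReal.ofReal q₂)
      (fun i hi => by
        show μ (ξ i ⁻¹' {rwlG t i}) = _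
        rw [rwlG_mem_R hi]; exact hd₁ i)
      (fun i hi hi2 => by
        show μ (ξ i ⁻¹' {rwlG t i}) = _
        rw [rwlG_mem_HR hi hi2]; exact hd₂ i)
      (fun i hi => by
        show μ (ξ i ⁻¹' {rwlG t i}) = _
        rw [rwlG_mem_U (fun hmem => (Finset.mem_sdiff.1 (hU hi)).2 hmem)
          (fun hmem => (Finset.mem_sdiff.1 (hU hi)).2 (hRH hmem)) hi]
        exact hd₃ i)
      (fun i _ hi2 hi3 => by
        show μ (ξ i ⁻¹' {rwlG t i}) = _
        rw [rwlG_mem_D hi2 (fun hmem => hi2 (hRH hmem)) hi3]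
        exact hd₄ i)
    rw [this, hP]
    rw [ENNReal.ofReal_mul (by positivity), ENNReal.ofReal_mul (by positivity),
      ENNReal.ofReal_mul (by positivity), ENNReal.ofReal_pow hp₁, ENNReal.ofReal_pow hq₁,
      ENNReal.ofReal_pow hp₂, ENNReal.ofReal_pow hq₂]
    ring
  have hsub : ∀ t ∈ T, A t ⊆ {ω | (∑ i ∈ Finset.range n, ξ i ω) = v} := by
    intro t ht ω hω
    rw [hmemA] at hω
    have hsum : ∑ i ∈ Finset.range n, ξ i ω = ∑ i ∈ Finset.range n, rwlG t i :=
      Finset.sum_congr rfl hω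
    obtain ⟨hH, hcardH, hRH, hcardR, hU, hcardU⟩ := rwlT_mem.1 ht
    have := rwl_sum_parts (M := ℤ × ℤ) ht hn (rwlG t) (1,0) (-1,0) (0,1) (0,-1)
      (fun i hi => rwlG_mem_R hi)
      (fun i hi hi2 => rwlG_mem_HR hi hi2)
      (fun i hi => rwlG_mem_U (fun hmem => (Finset.mem_sdiff.1 (hU hi)).2 hmem)
          (fun hmem => (Finset.mem_sdiff.1 (hU hi)).2 (hRH hmem)) hi)
      (fun i _ hi2 hi3 => rwlG_mem_D hi2 (fun hmem => hi2 (hRH hmem)) hi3)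
    show ∑ i ∈ Finset.range n, ξ i ω = v
    rw [hsum, this]
    have : v = ((k1:ℤ) - k2, (k3:ℤ) - k4) := Prod.ext hv1 hv2
    rw [this]
    simp [Prod.ext_iff, Prod.smul_def]
    constructor <;> push_cast <;> ring
  have hdisj : Set.PairwiseDisjoint (↑T) A := by
    intro t ht t' ht' hne
    simp only [Function.onFun]
    rw [Set.disjoint_left]
    intro ω hω hω'
    rw [hmemA] at hω hω'
    exact hne (rwlG_inj ht ht' (fun i hi => (hω i hi).symm.trans (hω' i hi)))
  calc ((n.choose (k1+k2) * (k1+k2).choose k1 * ((n-(k1+k2)).choose k3) : ℕ) : ENNReal) * P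
      = (T.card : ENNReal) * P := by rw [hT, rwlT_card]
    _ = ∑ t ∈ T, μ (A t) := by
        rw [Finset.sum_congr rfl hμA, Finset.sum_const, nsmul_eq_mul]
    _ = μ (⋃ t ∈ T, A t) := (measure_biUnion_finset hdisj (fun t _ => hmeasA t)).symm
    _ ≤ μ {ω | (∑ i ∈ Finset.range n, ξ i ω) = v} := by
        apply measure_mono
        exact Set.iUnion₂_subset hsub

open MeasureTheory ProbabilityTheory

theorem rw_local_lower_bound
    {Ω : Type*} [MeasurableSpace Ω] (μ : Measure Ω) [IsProbabilityMeasure μ]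
    (p₁ q₁ p₂ q₂ : ℝ) (hp₁ : 0 ≤ p₁) (hq₁ : 0 ≤ q₁) (hp₂ : 0 ≤ p₂) (hq₂ : 0 ≤ q₂)
    (hsum : p₁ + q₁ + p₂ + q₂ = 1) (hh : 0 < p₁ + q₁) (hv : 0 < p₂ + q₂)
    (ξ : ℕ → Ω → ℤ × ℤ) (hmeas : ∀ i, Measurable (ξ i))
    (hindep : iIndepFun ξ μ)
    (hrange : ∀ i ω, ξ i ω ∈ ({(1, 0), (-1, 0), (0, 1), (0, -1)} : Set (ℤ × ℤ)))
    (hd₁ : ∀ i, μ (ξ i ⁻¹' {((1 : ℤ), (0 : ℤ))}) = ENNReal.ofReal p₁)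
    (hd₂ : ∀ i, μ (ξ i ⁻¹' {((-1 : ℤ), (0 : ℤ))}) = ENNReal.ofReal q₁)
    (hd₃ : ∀ i, μ (ξ i ⁻¹' {((0 : ℤ), (1 : ℤ))}) = ENNReal.ofReal p₂)
    (hd₄ : ∀ i, μ (ξ i ⁻¹' {((0 : ℤ), (-1 : ℤ))}) = ENNReal.ofReal q₂) :
    ∃ c > (0:ℝ), ∀ n : ℕ, 1 ≤ n → ∀ v : ℤ × ℤ,
      (v.1 : ℝ) = (p₁ - q₁) * n → (v.2 : ℝ) = (p₂ - q₂) * n →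
      |p₁ - q₁| ≤ 1 - 2 / n → |p₂ - q₂| ≤ 1 - 2 / n →
      (v.1 + v.2) % 2 = (n : ℤ) % 2 →
      μ {ω | (∑ i ∈ Finset.range n, ξ i ω) = v} ≥
        ENNReal.ofReal (c * (n : ℝ) ^ (-(3:ℝ)/2)) := by
  refine ⟨Real.sqrt (2*Real.pi) * Real.exp (-8 - (p₁⁻¹ + q₁⁻¹ + p₂⁻¹ + q₂⁻¹)), by positivity,
    ?_⟩
  intro n hn v hx hy _ _ hpar
  obtain ⟨k1, k2, k3, k4, hks, hv1, hv2, hb1, hb2, hb3, hb4, hg1, hg2, hg3, hg4⟩ :=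
    rwl_construct p₁ q₁ p₂ q₂ hp₁ hq₁ hp₂ hq₂ hsum n v.1 v.2 hx hy hpar
  have hprob := rwl_prob μ p₁ q₁ p₂ q₂ hp₁ hq₁ hp₂ hq₂ ξ hmeas hindep hd₁ hd₂ hd₃ hd₄
    n k1 k2 k3 k4 hks v hv1 hv2
  refine le_trans ?_ hprob
  -- now a real inequality behind ofReal
  set N : ℕ := n.choose (k1+k2) * (k1+k2).choose k1 * ((n-(k1+k2)).choose k3) with hN
  rw [show ((N:ℕ) : ENNReal) = ENNReal.ofReal (N:ℝ) by rw [ENNReal.ofReal_natCast],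
    ← ENNReal.ofReal_mul (by positivity)]
  apply ENNReal.ofReal_le_ofReal
  -- identify N with factorials
  have hnpos : (0:ℝ) < n := by exact_mod_cast hn
  have hk12 : k1 + k2 ≤ n := by omega
  have hsub34 : n - (k1+k2) = k3 + k4 := by omega
  have hf1 : (0:ℝ) < k1.factorial := by exact_mod_cast k1.factorial_pos
  have hf2 : (0:ℝ) < k2.factorial := by exact_mod_cast k2.factorial_pos
  have hf3 : (0:ℝ) < k3.factorial := by exact_mod_cast k3.factorial_pos
  have hf4 : (0:ℝ) < k4.factorial := by exact_mod_cast k4.factorial_pos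
  have e1 : (n.choose (k1+k2) : ℝ) * (k1+k2).factorial * (n-(k1+k2)).factorial
      = n.factorial := by exact_mod_cast Nat.choose_mul_factorial_mul_factorial hk12
  have e2 : ((k1+k2).choose k1 : ℝ) * k1.factorial * k2.factorial = (k1+k2).factorial := by
    have := Nat.choose_mul_factorial_mul_factorial (Nat.le_add_right k1 k2)
    rw [Nat.add_sub_cancel_left] at this
    exact_mod_cast this
  have e3 : (((n-(k1+k2)).choose k3 : ℕ) : ℝ) * k3.factorial * k4.factorial
      = (n-(k1+k2)).factorial := by
    rw [hsub34]
    have := Nat.choose_mul_factorial_mul_factorial (Nat.le_add_right k3 k4)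
    rw [Nat.add_sub_cancel_left] at this
    exact_mod_cast this
  have hNfac : (N:ℝ) * (k1.factorial * k2.factorial * k3.factorial * k4.factorial)
      = n.factorial := by
    have expand : (N:ℝ) = (n.choose (k1+k2) : ℝ) * ((k1+k2).choose k1 : ℝ)
        * (((n-(k1+k2)).choose k3 : ℕ) : ℝ) := by rw [hN]; push_cast; ring
    calc (N:ℝ) * (k1.factorial * k2.factorial * k3.factorial * k4.factorial)
        = (n.choose (k1+k2) : ℝ) * ((((k1+k2).choose k1 : ℝ) * k1.factorial * k2.factorial)
            * ((((n-(k1+k2)).choose k3 : ℕ) : ℝ) * k3.factorial * k4.factorial)) := by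
          rw [expand]; ring
      _ = (n.choose (k1+k2) : ℝ) * ((k1+k2).factorial * (n-(k1+k2)).factorial) := by
          rw [e2, e3]
      _ = (n.factorial : ℝ) := by rw [← e1]; ring
  have hNid : (N:ℝ) = (n.factorial : ℝ)
      / (k1.factorial * k2.factorial * k3.factorial * k4.factorial) := by
    rw [eq_div_iff (by positivity)]
    exact hNfac
  -- core inequality
  have hcore := rwl_core n k1 k2 k3 k4 p₁ q₁ p₂ q₂ hp₁ hq₁ hp₂ hq₂ hn hks
    (by linarith) hb1 hb2 hb3 hb4 hg1 hg2 hg3 hg4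
  -- rpow identity
  have hrpow : (n:ℝ) ^ (-(3:ℝ)/2) = Real.sqrt n / (n:ℝ)^2 := by
    have h1 : (n:ℝ) ^ (-(3:ℝ)/2) = (n:ℝ) ^ ((1:ℝ)/2) / (n:ℝ) ^ (2:ℝ) := by
      rw [← Real.rpow_sub hnpos]
      norm_num
    rw [h1, ← Real.rpow_natCast (n:ℝ) 2]
    rw [← Real.sqrt_eq_rpow]
    norm_num
  rw [hrpow, hNid]
  calc Real.sqrt (2*Real.pi) * Real.exp (-8 - (p₁⁻¹ + q₁⁻¹ + p₂⁻¹ + q₂⁻¹))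
        * (Real.sqrt n / (n:ℝ)^2)
      = Real.sqrt (2*Real.pi) * Real.exp (-8 - (p₁⁻¹ + q₁⁻¹ + p₂⁻¹ + q₂⁻¹))
        * Real.sqrt n / (n:ℝ)^2 := by ring
    _ ≤ ((n.factorial : ℝ) / (k1.factorial * k2.factorial * k3.factorial * k4.factorial))
        * (p₁^k1 * q₁^k2 * p₂^k3 * q₂^k4) := hcore
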